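/- Let A = ℓ² and a_i = e_i/√i, where (e_i) is the standard unit vector basis. Then ∑ ‖a_i‖² = ∞, yet the set {(⟨a_i, β⟩)_{i} : β ∈ ℓ², ‖β‖ ≤ 1} is totally bounded in ℓ². -/

import Mathlib

open scoped ENNReal ComplexInnerProductSpace

private lemma two_toReal : ((2 : ℝ≥0∞).toReal) = (2 : ℝ) := by norm_num

private lemma single_sub' (i : ℕ) (x y : ℂ) :
    lp.single (E := fun _ : ℕ => ℂ) 2 i (x - y) = lp.single 2 i x - lp.single 2 i y := by
  apply lp.ext
  funext j
  by_cases h : j = i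
  · subst h
    simp [lp.single_apply_self]
  · simp [lp.single_apply_ne _ _ _ h]

private lemma continuous_single' (i : ℕ) :
    Continuous fun x : ℂ => lp.single (E := fun _ : ℕ => ℂ) 2 i x := by
  have : Isometry fun x : ℂ => lp.single (E := fun _ : ℕ => ℂ) 2 i x := by
    refine Isometry.of_dist_eq fun x y => ?_
    rw [dist_eq_norm, dist_eq_norm, ← single_sub']
    have := lp.norm_single (E := fun _ : ℕ => ℂ) (p := 2) (by norm_num) i (x - y)
    simpa using this
  exact this.continuous

/-- For `aᵢ = eᵢ/√i` in `ℓ²`, the series `∑ ‖aᵢ‖²` diverges, yet the set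
`{(⟨aᵢ, β⟩)ᵢ : β ∈ ℓ², ‖β‖ ≤ 1}` is totally bounded in `ℓ²`. -/
theorem example_lp_ne_lpc (a : ℕ → lp (fun _ : ℕ => ℂ) 2)
    (ha : ∀ i, a i = ((1 / Real.sqrt (i + 1) : ℝ) : ℂ) • lp.single 2 i 1) :
    ¬ Summable (fun i => ‖a i‖ ^ (2 : ℝ)) ∧
      TotallyBounded {x : lp (fun _ : ℕ => ℂ) 2 |
        ∃ β : lp (fun _ : ℕ => ℂ) 2, ‖β‖ ≤ 1 ∧ ∀ i, x i = ⟪a i, β⟫} := by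
  have hp2 : (0 : ℝ) < (2 : ℝ≥0∞).toReal := by norm_num
  -- norm of `a i`
  have hnorm : ∀ i : ℕ, ‖a i‖ = 1 / Real.sqrt (i + 1) := by
    intro i
    have h1 : ‖lp.single (E := fun _ : ℕ => ℂ) 2 i (1 : ℂ)‖ = 1 := by
      have := lp.norm_single (E := fun _ : ℕ => ℂ) (p := 2) (by norm_num) i (1 : ℂ)
      simpa using this
    have hs : (0 : ℝ) < Real.sqrt (i + 1) := Real.sqrt_pos.2 (by positivity)
    rw [ha i, norm_smul, h1, mul_one]
    simp [abs_of_nonneg (le_of_lt (by positivity : (0:ℝ) < 1 / Real.sqrt (i+1)))]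
  constructor
  · -- divergence of `∑ ‖a i‖²`
    intro hsum
    have h1 : (fun i : ℕ => ‖a i‖ ^ (2 : ℝ)) = fun i : ℕ => 1 / ((i : ℝ) + 1) := by
      funext i
      rw [hnorm i, Real.rpow_two, div_pow, one_pow, Real.sq_sqrt (by positivity)]
    rw [h1] at hsum
    have h2 : Summable (fun i : ℕ => 1 / ((i : ℝ))) := by
      rw [← summable_nat_add_iff 1]
      convert hsum using 2 with i
      push_cast
      exacts [rfl, by push_cast; ring]
    exact Real.not_summable_one_div_natCast h2
  · -- total boundedness
    rw [Metric.totallyBounded_iff]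
    intro ε hε
    obtain ⟨N, hN⟩ := exists_nat_gt (9 / ε ^ 2)
    -- basic estimate: for `x` in the set with witness `β`
    set S := {x : lp (fun _ : ℕ => ℂ) 2 |
        ∃ β : lp (fun _ : ℕ => ℂ) 2, ‖β‖ ≤ 1 ∧ ∀ i, x i = ⟪a i, β⟫}
    -- the truncation map
    let L : (Fin N → ℂ) → lp (fun _ : ℕ => ℂ) 2 :=
      fun v => ∑ i : Fin N, lp.single 2 (i : ℕ) (v i)
    have hLcont : Continuous L := by
      refine continuous_finset_sum _ fun i _ => ?_
      exact (continuous_single' (i : ℕ)).comp (continuous_apply i)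
    have hKcomp : IsCompact (L '' Metric.closedBall 0 1) :=
      (isCompact_closedBall _ _).image hLcont
    obtain ⟨t, htfin, htsub⟩ := (Metric.totallyBounded_iff.1 hKcomp.totallyBounded)
      (ε / 3) (by positivity)
    refine ⟨t, htfin, ?_⟩
    intro x hx
    obtain ⟨β, hβ, hxβ⟩ := hx
    -- coordinates of x
    have hxi : ∀ i : ℕ, x i = ((1 / Real.sqrt (i + 1) : ℝ) : ℂ) * β i := by
      intro i
      rw [hxβ i, ha i, inner_smul_left, lp.inner_single_left]
      simp [Complex.conj_ofReal, RCLike.inner_apply]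
    have hxin : ∀ i : ℕ, ‖x i‖ = (1 / Real.sqrt (i + 1)) * ‖β i‖ := by
      intro i
      rw [hxi i, norm_mul]
      congr 1
      simp [abs_of_nonneg (le_of_lt (by positivity : (0:ℝ) < 1 / Real.sqrt (i+1)))]
    -- the truncation of x
    set y : lp (fun _ : ℕ => ℂ) 2 := ∑ i ∈ Finset.range N, lp.single 2 i (x i) with hy
    have hyL : y = L (fun i : Fin N => x (i : ℕ)) := by
      rw [hy]
      simp only [L]
      rw [← Fin.sum_univ_eq_sum_range (fun i => lp.single (E := fun _ : ℕ => ℂ) 2 i (x i)) N]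
    have hymem : y ∈ L '' Metric.closedBall 0 1 := by
      refine ⟨fun i : Fin N => x (i : ℕ), ?_, hyL.symm⟩
      rw [Metric.mem_closedBall, dist_zero_right]
      rw [pi_norm_le_iff_of_nonneg zero_le_one]
      intro i
      rw [hxin]
      have h1 : (1 : ℝ) ≤ Real.sqrt ((i : ℕ) + 1) := by
        rw [Real.one_le_sqrt]
        push_cast
        linarith
      have h2 : ‖β (i : ℕ)‖ ≤ 1 := le_trans (lp.norm_apply_le_norm (by norm_num) β (i : ℕ)) hβ
      have h3 : 1 / Real.sqrt ((i : ℕ) + 1) ≤ 1 := by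
        rw [div_le_one (by linarith)]; exact h1
      calc 1 / Real.sqrt ((i : ℕ) + 1) * ‖β (i : ℕ)‖ ≤ 1 * 1 :=
            mul_le_mul h3 h2 (norm_nonneg _) zero_le_one
        _ = 1 := one_mul 1
    -- norm estimate ‖x - y‖ ≤ ε / 3
    have hsumx : Summable fun i : ℕ => ‖x i‖ ^ ((2 : ℝ≥0∞).toReal) :=
      (memℓp_gen_iff hp2).1 (lp.memℓp x)
    have hsumβ : Summable fun i : ℕ => ‖β i‖ ^ ((2 : ℝ≥0∞).toReal) :=
      (memℓp_gen_iff hp2).1 (lp.memℓp β)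
    set C : Set ℕ := (↑(Finset.range N) : Set ℕ)ᶜ with hC
    have hkey : ‖x - y‖ ^ ((2 : ℝ≥0∞).toReal) =
        ∑' i : C, ‖x (i : ℕ)‖ ^ ((2 : ℝ≥0∞).toReal) := by
      rw [hy, lp.norm_compl_sum_single hp2 x (Finset.range N),
        lp.norm_rpow_eq_tsum hp2 x, ← Summable.sum_add_tsum_compl (s := Finset.range N) hsumx]
      ring
    have hβ2 : ∑' i : ℕ, ‖β i‖ ^ ((2 : ℝ≥0∞).toReal) ≤ 1 := by
      rw [← lp.norm_rpow_eq_tsum hp2 β]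
      calc ‖β‖ ^ ((2 : ℝ≥0∞).toReal) ≤ (1 : ℝ) ^ ((2 : ℝ≥0∞).toReal) :=
            Real.rpow_le_rpow (norm_nonneg _) hβ (by norm_num)
        _ = 1 := Real.one_rpow _
    have hbound : ‖x - y‖ ^ ((2 : ℝ≥0∞).toReal) ≤ 1 / ((N : ℝ) + 1) := by
      rw [hkey]
      have hterm : ∀ i : C,
          ‖x (i : ℕ)‖ ^ ((2 : ℝ≥0∞).toReal) ≤
            (1 / ((N : ℝ) + 1)) * ‖β (i : ℕ)‖ ^ ((2 : ℝ≥0∞).toReal) := by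
        rintro ⟨i, hi⟩
        have hiN : N ≤ i := by
          rw [hC] at hi
          simpa using hi
        have hsq : (0:ℝ) < (i : ℝ) + 1 := by positivity
        have : ‖x i‖ ^ ((2 : ℝ≥0∞).toReal) =
            (1 / ((i : ℝ) + 1)) * ‖β i‖ ^ ((2 : ℝ≥0∞).toReal) := by
          rw [hxin i, two_toReal, Real.rpow_two, Real.rpow_two, mul_pow, div_pow, one_pow,
            Real.sq_sqrt (le_of_lt hsq)]
        rw [this]
        have h1 : 1 / ((i : ℝ) + 1) ≤ 1 / ((N : ℝ) + 1) := by
          apply one_div_le_one_div_of_le (by positivity)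
          have : (N : ℝ) ≤ (i : ℝ) := by exact_mod_cast hiN
          linarith
        exact mul_le_mul_of_nonneg_right h1 (by positivity)
      calc ∑' i : C, ‖x (i : ℕ)‖ ^ ((2 : ℝ≥0∞).toReal)
          ≤ ∑' i : C,
              (1 / ((N : ℝ) + 1)) * ‖β (i : ℕ)‖ ^ ((2 : ℝ≥0∞).toReal) := by
            refine Summable.tsum_le_tsum hterm (hsumx.subtype _) ?_
            exact (hsumβ.subtype _).mul_left _
        _ = (1 / ((N : ℝ) + 1)) *
              ∑' i : C, ‖β (i : ℕ)‖ ^ ((2 : ℝ≥0∞).toReal) :=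
            tsum_mul_left
        _ ≤ (1 / ((N : ℝ) + 1)) * ∑' i : ℕ, ‖β i‖ ^ ((2 : ℝ≥0∞).toReal) := by
            refine mul_le_mul_of_nonneg_left ?_ (by positivity)
            exact Summable.tsum_subtype_le _ _ (fun i => by positivity) hsumβ
        _ ≤ (1 / ((N : ℝ) + 1)) * 1 := mul_le_mul_of_nonneg_left hβ2 (by positivity)
        _ = 1 / ((N : ℝ) + 1) := mul_one _
    have hxy : ‖x - y‖ ≤ ε / 3 := by
      have hN' : 1 / ((N : ℝ) + 1) < (ε / 3) ^ 2 := by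
        rw [div_lt_iff₀ (by positivity)]
        rw [div_lt_iff₀ (by positivity)] at hN
        have : (ε / 3) ^ 2 = ε ^ 2 / 9 := by ring
        rw [this]
        nlinarith [sq_nonneg ε]
      have h2 : ‖x - y‖ ^ 2 ≤ (ε / 3) ^ 2 := by
        have := hbound
        rw [two_toReal, Real.rpow_two] at this
        linarith
      exact (abs_le_of_sq_le_sq' h2 (by positivity)).2
    -- find the net point
    obtain ⟨z, hz, hyz⟩ := Set.mem_iUnion₂.1 (htsub hymem)
    refine Set.mem_iUnion₂.2 ⟨z, hz, ?_⟩
    rw [Metric.mem_ball] at hyz ⊢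
    calc dist x z ≤ dist x y + dist y z := dist_triangle x y z
      _ ≤ ε / 3 + dist y z := by rw [dist_eq_norm]; linarith
      _ < ε / 3 + ε / 3 := by linarith
      _ ≤ ε := by linarith
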